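/- Let $X$ be a Banach space, and let $u, u_0, u_1, \ldots, u_j$ be elements of a normed space $V$ of $X$-valued functions. Let $\mathrm{Int}, Q_0, \ldots, Q_j : V \to X$ be linear with $Q_{-1} = 0$, $\Delta Q_\ell = Q_\ell - Q_{\ell-1}$. Suppose (i) $\|\mathrm{Int}\, u - Q_j u\|_X \le C 2^{-j}$, and (ii) $\|(\mathrm{Int} - Q_\ell)(u - u_{\ell'})\|_X \le C 2^{-(\ell + \ell')}$ for all $0 \le \ell, \ell' \le j$ (with the convention that (ii) also holds for $\ell - 1$ in place of $\ell$, $Q_{-1} = 0$ meaning $\|\mathrm{Int}(u - u_{\ell'})\| \le C 2^{-\ell'+1}$). Then $\big\|\mathrm{Int}\, u - \sum_{\ell=0}^j \Delta Q_\ell\, u_{j-\ell}\big\|_X \le 3C (j+2) 2^{-j}$. -/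
import Mathlib

lemma mlq_telescope {V X : Type*} [AddCommGroup V] [Module ℝ V]
    [NormedAddCommGroup X] [NormedSpace ℝ X]
    (Q ΔQ : ℕ → V →ₗ[ℝ] X)
    (hΔQ : ∀ ℓ, ΔQ ℓ = Q ℓ - (if ℓ = 0 then 0 else Q (ℓ - 1)))
    (v : V) : ∀ n : ℕ, ∑ ℓ ∈ Finset.range (n + 1), ΔQ ℓ v = Q n v := by
  intro n
  induction n with
  | zero => simp [hΔQ 0]
  | succ n ih =>
      rw [Finset.sum_range_succ, ih, hΔQ (n + 1)]
      simp

/-- Abstract multilevel quadrature error estimate: if `‖Int u - Q_j u‖ ≤ C 2^{-j}` and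
`‖(Int - Q_ℓ)(u - u_{ℓ'})‖ ≤ C 2^{-(ℓ+ℓ')}` for `0 ≤ ℓ, ℓ' ≤ j` (with the convention
`Q_{-1} = 0`, i.e. `‖Int (u - u_{ℓ'})‖ ≤ 2 C 2^{-ℓ'}`), then
`‖Int u - ∑_{ℓ=0}^j ΔQ_ℓ u_{j-ℓ}‖ ≤ 3 C (j+2) 2^{-j}`. -/
theorem multilevel_quadrature_error
    {V X : Type*} [AddCommGroup V] [Module ℝ V]
    [NormedAddCommGroup X] [NormedSpace ℝ X] [CompleteSpace X]
    (j : ℕ) (Int : V →ₗ[ℝ] X) (Q : ℕ → V →ₗ[ℝ] X)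
    (ΔQ : ℕ → V →ₗ[ℝ] X)
    (hΔQ : ∀ ℓ, ΔQ ℓ = Q ℓ - (if ℓ = 0 then 0 else Q (ℓ - 1)))
    (u : V) (uh : ℕ → V) (C : ℝ) (hC : 0 ≤ C)
    (h1 : ‖Int u - Q j u‖ ≤ C * (1 / 2) ^ j)
    (h2 : ∀ ℓ ℓ' : ℕ, ℓ ≤ j → ℓ' ≤ j →
      ‖Int (u - uh ℓ') - Q ℓ (u - uh ℓ')‖ ≤ C * (1 / 2) ^ (ℓ + ℓ'))
    (h3 : ∀ ℓ' : ℕ, ℓ' ≤ j → ‖Int (u - uh ℓ')‖ ≤ C * 2 * (1 / 2) ^ ℓ') :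
    ‖Int u - ∑ ℓ ∈ Finset.range (j + 1), ΔQ ℓ (uh (j - ℓ))‖
      ≤ 3 * C * (j + 2) * (1 / 2) ^ j := by
  have hsplit : Int u - ∑ ℓ ∈ Finset.range (j + 1), ΔQ ℓ (uh (j - ℓ))
      = (Int u - Q j u) + ∑ ℓ ∈ Finset.range (j + 1), ΔQ ℓ (u - uh (j - ℓ)) := by
    have ht := mlq_telescope Q ΔQ hΔQ u j
    rw [← ht]
    simp only [map_sub, Finset.sum_sub_distrib]
    abel
  rw [hsplit]
  have hterm : ∀ ℓ ∈ Finset.range (j + 1),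
      ‖ΔQ ℓ (u - uh (j - ℓ))‖ ≤ 3 * C * (1 / 2) ^ j := by
    intro ℓ hℓ
    have hℓj : ℓ ≤ j := Nat.lt_succ_iff.mp (Finset.mem_range.mp hℓ)
    have hℓ'j : j - ℓ ≤ j := Nat.sub_le _ _
    set w := u - uh (j - ℓ) with hw
    rcases Nat.eq_zero_or_pos ℓ with h0 | hpos
    · subst h0
      have hq : ΔQ 0 w = -(Int w - Q 0 w) + Int w := by
        have h0 : ΔQ 0 = Q 0 := by rw [hΔQ 0]; simp
        rw [h0]; abel
      rw [hq]
      calc ‖-(Int w - Q 0 w) + Int w‖ ≤ ‖Q 0 w - Int w‖ + ‖Int w‖ := by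
            simpa using norm_add_le (-(Int w - Q 0 w)) (Int w)
        _ = ‖Int w - Q 0 w‖ + ‖Int w‖ := by rw [norm_sub_rev]
        _ ≤ C * (1 / 2) ^ (0 + (j - 0)) + C * 2 * (1 / 2) ^ (j - 0) :=
            add_le_add (h2 0 (j - 0) (Nat.zero_le _) hℓ'j) (h3 (j - 0) hℓ'j)
        _ = 3 * C * (1 / 2) ^ j := by simp; ring
    · have hne : ℓ ≠ 0 := Nat.pos_iff_ne_zero.mp hpos
      have hq : ΔQ ℓ w = -(Int w - Q ℓ w) + (Int w - Q (ℓ - 1) w) := by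
        rw [hΔQ ℓ]
        simp only [if_neg hne, LinearMap.sub_apply]
        abel
      rw [hq]
      have e1 : ℓ + (j - ℓ) = j := Nat.add_sub_cancel' hℓj
      have e2 : (ℓ - 1) + (j - ℓ) = j - 1 := by omega
      calc ‖-(Int w - Q ℓ w) + (Int w - Q (ℓ - 1) w)‖
            ≤ ‖Q ℓ w - Int w‖ + ‖Int w - Q (ℓ - 1) w‖ := by
            simpa using norm_add_le (-(Int w - Q ℓ w)) (Int w - Q (ℓ - 1) w)
        _ = ‖Int w - Q ℓ w‖ + ‖Int w - Q (ℓ - 1) w‖ := by rw [norm_sub_rev (Q ℓ w)]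
        _ ≤ C * (1 / 2) ^ (ℓ + (j - ℓ)) + C * (1 / 2) ^ ((ℓ - 1) + (j - ℓ)) :=
            add_le_add (h2 ℓ (j - ℓ) hℓj hℓ'j)
              (h2 (ℓ - 1) (j - ℓ) (le_trans (Nat.sub_le _ _) hℓj) hℓ'j)
        _ = C * (1 / 2) ^ j + C * (1 / 2) ^ (j - 1) := by rw [e1, e2]
        _ ≤ 3 * C * (1 / 2) ^ j := by
            have hj1 : ((1 : ℝ) / 2) ^ (j - 1) ≤ 2 * (1 / 2) ^ j := by
              rcases Nat.eq_zero_or_pos j with hj | hj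
              · subst hj; norm_num
              · have hjj : j - 1 + 1 = j := Nat.succ_pred_eq_of_pos hj
                have heq : ((1:ℝ) / 2) ^ (j - 1) * (1 / 2) = (1 / 2) ^ j := by
                  rw [← pow_succ, hjj]
                linarith
            nlinarith [pow_nonneg (by norm_num : (0:ℝ) ≤ 1/2) j,
              pow_nonneg (by norm_num : (0:ℝ) ≤ 1/2) (j-1)]
  calc ‖(Int u - Q j u) + ∑ ℓ ∈ Finset.range (j + 1), ΔQ ℓ (u - uh (j - ℓ))‖
      ≤ ‖Int u - Q j u‖ + ∑ ℓ ∈ Finset.range (j + 1), ‖ΔQ ℓ (u - uh (j - ℓ))‖ :=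
        le_trans (norm_add_le _ _) (by gcongr; exact norm_sum_le _ _)
    _ ≤ C * (1 / 2) ^ j + ∑ ℓ ∈ Finset.range (j + 1), 3 * C * (1 / 2) ^ j :=
        add_le_add h1 (Finset.sum_le_sum hterm)
    _ = C * (1 / 2) ^ j + (j + 1) * (3 * C * (1 / 2) ^ j) := by
        rw [Finset.sum_const, Finset.card_range]; ring
    _ ≤ 3 * C * (j + 2) * (1 / 2) ^ j := by
        have hp := pow_nonneg (by norm_num : (0:ℝ) ≤ 1/2) j
        nlinarith
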